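/- Define G_k(a,b,q) as the generating function of d_k. Then for all k ≥ 1: G_{(2k+2)_{ab}}(a,b,q) = G_{(2k+1)_b}(a,b,q) + a b q^{2k+2} G_{(2k)_a}(a,b,q) + a b² q^{4k+2} G_{(2k−1)_a}(a,b,q). -/

import Mathlib

/-- The five colours a, b, ab, a², b². -/
inductive Col where
  | a | b | ab | aa | bb
deriving DecidableEq, Inhabited

open Col

/-- Position of a coloured integer in the ordering
1_{ab} < 1_a < 1_{b²} < 1_b < 2_{ab} < 2_a < 3_{a²} < 2_b < 3_{ab} < ⋯ . -/
def colPos : ℕ × Col → ℕ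
  | (k, Col.ab) => 4 * k - 4
  | (k, Col.a)  => 4 * k - 3
  | (k, Col.bb) => 4 * k - 2
  | (k, Col.b)  => 4 * k - 1
  | (k, Col.aa) => 4 * k - 6

/-- Entry of the matrix A: minimal gap below a part of size `k` and colour `x`,
above a part of colour `y`. -/
def colMinGap (k : ℕ) (x y : Col) : ℕ :=
  match x, y with
  | Col.a, y => if k % 2 = 1 then
      (match y with | Col.ab => 1 | _ => 2)
    else
      (match y with | Col.aa => 3 | Col.bb => 3 | _ => 2)
  | Col.bb, y => (match y with | Col.b => 3 | Col.bb => 4 | _ => 2)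
  | Col.b, y => if k % 2 = 1 then
      (match y with | Col.a => 1 | Col.ab => 1 | _ => 2)
    else
      (match y with | Col.a => 1 | Col.ab => 1 | Col.aa => 1 | Col.bb => 3 | _ => 2)
  | Col.ab, y => if k % 2 = 0 then
      (match y with | Col.aa => 3 | Col.bb => 3 | _ => 2)
    else
      (match y with | Col.b => 3 | Col.bb => 3 | _ => 2)
  | Col.aa, y => (match y with | Col.aa => 4 | Col.bb => 4 | _ => 3)

/-- A coloured partition as in the non-dilated Siladić theorem: parts are coloured
positive integers, squared colours only occur on odd integers, there is no part
1_{ab} or 1_{b²}, and consecutive parts satisfy the gap conditions of matrix A. -/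
def IsColPartition (l : List (ℕ × Col)) : Prop :=
  (∀ p ∈ l, 1 ≤ p.1 ∧ ((p.2 = Col.aa ∨ p.2 = Col.bb) → p.1 % 2 = 1) ∧
    p ≠ (1, Col.ab) ∧ p ≠ (1, Col.bb)) ∧
  ∀ i, i + 1 < l.length →
    l[i]!.1 ≥ l[i+1]!.1 + colMinGap l[i]!.1 l[i]!.2 l[i+1]!.2

/-- Number of parts coloured a or ab, plus twice the number of parts coloured a². -/
def aCt (l : List (ℕ × Col)) : ℕ :=
  (l.countP fun p => p.2 == Col.a || p.2 == Col.ab) +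
    2 * (l.countP fun p => p.2 == Col.aa)

/-- Number of parts coloured b or ab, plus twice the number of parts coloured b². -/
def bCt (l : List (ℕ × Col)) : ℕ :=
  (l.countP fun p => p.2 == Col.b || p.2 == Col.ab) +
    2 * (l.countP fun p => p.2 == Col.bb)

/-- D(u,v,n): coloured partitions of n with a-count u and b-count v. -/
noncomputable def Dct (u v n : ℕ) : ℕ :=
  Nat.card {l : List (ℕ × Col) // IsColPartition l ∧
    (l.map Prod.fst).sum = n ∧ aCt l = u ∧ bCt l = v}

/-- d_K(u,v,n): as D(u,v,n) but with largest part at most K in the coloured order;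
integer arguments (negative values give 0). -/
noncomputable def dct (K : ℕ × Col) (u v n : ℤ) : ℕ :=
  Nat.card {l : List (ℕ × Col) // IsColPartition l ∧
    (∀ p ∈ l, colPos p ≤ colPos K) ∧
    ((l.map Prod.fst).sum : ℤ) = n ∧ (aCt l : ℤ) = u ∧ (bCt l : ℤ) = v}

/-- e_K(u,v,n): as d_K(u,v,n) but with largest part exactly K. -/
noncomputable def ect (K : ℕ × Col) (u v n : ℤ) : ℕ :=
  Nat.card {l : List (ℕ × Col) // IsColPartition l ∧
    (∀ p ∈ l, colPos p ≤ colPos K) ∧ l ≠ [] ∧ l.head! = K ∧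
    ((l.map Prod.fst).sum : ℤ) = n ∧ (aCt l : ℤ) = u ∧ (bCt l : ℤ) = v}

/-- The generating function G_K(a,b,q) = 1 + ∑_{u,v≥0,n≥1} d_K(u,v,n) aᵘbᵛqⁿ,
as a formal power series in the variables a = X 0, b = X 1, q = X 2. -/
noncomputable def Gf (K : ℕ × Col) : MvPowerSeries (Fin 3) ℚ :=
  fun e => (dct K (e 0) (e 1) (e 2) : ℚ)


def PartOK (p : ℕ × Col) : Prop :=
  1 ≤ p.1 ∧ ((p.2 = Col.aa ∨ p.2 = Col.bb) → p.1 % 2 = 1) ∧ p ≠ (1, Col.ab) ∧ p ≠ (1, Col.bb)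

lemma gE_cons_zero {α} [Inhabited α] (p : α) (l : List α) : (p :: l)[0]! = p := by
  rw [getElem!_pos (p::l) 0 (by simp)]; rfl

lemma gE_cons_succ {α} [Inhabited α] (p : α) (l : List α) (i : ℕ) : (p :: l)[i+1]! = l[i]! := by
  by_cases h : i < l.length
  · rw [getElem!_pos (p::l) (i+1) (by simp; omega), getElem!_pos l i h]
    simp
  · rw [getElem!_neg (p::l) (i+1) (by simp; omega), getElem!_neg l i h]

lemma isCol_nil : IsColPartition ([] : List (ℕ × Col)) := by
  constructor
  · simp
  · intro i hi; simp at hi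

lemma isCol_cons {p : ℕ × Col} {l : List (ℕ × Col)} :
    IsColPartition (p :: l) ↔
      PartOK p ∧ IsColPartition l ∧ ∀ q ∈ l.head?, p.1 ≥ q.1 + colMinGap p.1 p.2 q.2 := by
  constructor
  · rintro ⟨h1, h2⟩
    refine ⟨h1 p List.mem_cons_self, ⟨fun q hq => h1 q (List.mem_cons_of_mem _ hq), ?_⟩, ?_⟩
    · intro i hi
      have := h2 (i+1) (by simp; omega)
      rwa [gE_cons_succ, gE_cons_succ] at this
    · intro q hq
      cases l with
      | nil => simp at hq
      | cons r t =>
        simp only [List.head?_cons, Option.mem_def, Option.some.injEq] at hq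
        subst hq
        have := h2 0 (by simp)
        rwa [gE_cons_zero, gE_cons_succ, gE_cons_zero] at this
  · rintro ⟨hp, ⟨h1, h2⟩, hg⟩
    refine ⟨?_, ?_⟩
    · intro q hq
      rcases List.mem_cons.1 hq with h | h
      · subst h; exact hp
      · exact h1 q h
    · intro i hi
      simp only [List.length_cons] at hi
      match i, hi with
      | 0, hi =>
        rw [gE_cons_zero, gE_cons_succ]
        cases l with
        | nil => simp at hi
        | cons r t =>
          rw [gE_cons_zero]
          exact hg r (by simp)
      | (i+1), hi =>
        rw [gE_cons_succ, gE_cons_succ]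
        exact h2 i (by omega)

lemma isCol_tail {p : ℕ × Col} {l : List (ℕ × Col)} (h : IsColPartition (p :: l)) :
    IsColPartition l := (isCol_cons.1 h).2.1

lemma partOK_of_mem {l : List (ℕ × Col)} (h : IsColPartition l) {p : ℕ × Col} (hp : p ∈ l) :
    PartOK p := h.1 p hp

@[simp] lemma gap_a_a (m : ℕ) : colMinGap m Col.a Col.a = 2 := by
  unfold colMinGap; first | (split_ifs <;> rfl) | rfl

@[simp] lemma gap_a_b (m : ℕ) : colMinGap m Col.a Col.b = 2 := by
  unfold colMinGap; first | (split_ifs <;> rfl) | rfl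

@[simp] lemma gap_a_ab (m : ℕ) : colMinGap m Col.a Col.ab = if m % 2 = 1 then 1 else 2 := by
  unfold colMinGap; first | (split_ifs <;> rfl) | rfl

@[simp] lemma gap_a_aa (m : ℕ) : colMinGap m Col.a Col.aa = if m % 2 = 1 then 2 else 3 := by
  unfold colMinGap; first | (split_ifs <;> rfl) | rfl

@[simp] lemma gap_a_bb (m : ℕ) : colMinGap m Col.a Col.bb = if m % 2 = 1 then 2 else 3 := by
  unfold colMinGap; first | (split_ifs <;> rfl) | rfl

@[simp] lemma gap_bb_a (m : ℕ) : colMinGap m Col.bb Col.a = 2 := by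
  unfold colMinGap; first | (split_ifs <;> rfl) | rfl

@[simp] lemma gap_bb_b (m : ℕ) : colMinGap m Col.bb Col.b = 3 := by
  unfold colMinGap; first | (split_ifs <;> rfl) | rfl

@[simp] lemma gap_bb_ab (m : ℕ) : colMinGap m Col.bb Col.ab = 2 := by
  unfold colMinGap; first | (split_ifs <;> rfl) | rfl

@[simp] lemma gap_bb_aa (m : ℕ) : colMinGap m Col.bb Col.aa = 2 := by
  unfold colMinGap; first | (split_ifs <;> rfl) | rfl

@[simp] lemma gap_bb_bb (m : ℕ) : colMinGap m Col.bb Col.bb = 4 := by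
  unfold colMinGap; first | (split_ifs <;> rfl) | rfl

@[simp] lemma gap_b_a (m : ℕ) : colMinGap m Col.b Col.a = 1 := by
  unfold colMinGap; first | (split_ifs <;> rfl) | rfl

@[simp] lemma gap_b_ab (m : ℕ) : colMinGap m Col.b Col.ab = 1 := by
  unfold colMinGap; first | (split_ifs <;> rfl) | rfl

@[simp] lemma gap_b_b (m : ℕ) : colMinGap m Col.b Col.b = 2 := by
  unfold colMinGap; first | (split_ifs <;> rfl) | rfl

@[simp] lemma gap_b_aa (m : ℕ) : colMinGap m Col.b Col.aa = if m % 2 = 1 then 2 else 1 := by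
  unfold colMinGap; first | (split_ifs <;> rfl) | rfl

@[simp] lemma gap_b_bb (m : ℕ) : colMinGap m Col.b Col.bb = if m % 2 = 1 then 2 else 3 := by
  unfold colMinGap; first | (split_ifs <;> rfl) | rfl

@[simp] lemma gap_ab_a (m : ℕ) : colMinGap m Col.ab Col.a = 2 := by
  unfold colMinGap; first | (split_ifs <;> rfl) | rfl

@[simp] lemma gap_ab_ab (m : ℕ) : colMinGap m Col.ab Col.ab = 2 := by
  unfold colMinGap; first | (split_ifs <;> rfl) | rfl

@[simp] lemma gap_ab_bb (m : ℕ) : colMinGap m Col.ab Col.bb = 3 := by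
  unfold colMinGap; first | (split_ifs <;> rfl) | rfl

@[simp] lemma gap_ab_aa (m : ℕ) : colMinGap m Col.ab Col.aa = if m % 2 = 0 then 3 else 2 := by
  unfold colMinGap; first | (split_ifs <;> rfl) | rfl

@[simp] lemma gap_ab_b (m : ℕ) : colMinGap m Col.ab Col.b = if m % 2 = 0 then 2 else 3 := by
  unfold colMinGap; first | (split_ifs <;> rfl) | rfl

@[simp] lemma gap_aa_a (m : ℕ) : colMinGap m Col.aa Col.a = 3 := by
  unfold colMinGap; first | (split_ifs <;> rfl) | rfl

@[simp] lemma gap_aa_b (m : ℕ) : colMinGap m Col.aa Col.b = 3 := by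
  unfold colMinGap; first | (split_ifs <;> rfl) | rfl

@[simp] lemma gap_aa_ab (m : ℕ) : colMinGap m Col.aa Col.ab = 3 := by
  unfold colMinGap; first | (split_ifs <;> rfl) | rfl

@[simp] lemma gap_aa_aa (m : ℕ) : colMinGap m Col.aa Col.aa = 4 := by
  unfold colMinGap; first | (split_ifs <;> rfl) | rfl

@[simp] lemma gap_aa_bb (m : ℕ) : colMinGap m Col.aa Col.bb = 4 := by
  unfold colMinGap; first | (split_ifs <;> rfl) | rfl

lemma pos_lt_of_gap {p q : ℕ × Col} (hp : PartOK p) (hq : PartOK q)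
    (h : p.1 ≥ q.1 + colMinGap p.1 p.2 q.2) : colPos q < colPos p := by
  obtain ⟨m, c⟩ := p
  obtain ⟨m', c'⟩ := q
  obtain ⟨hm, hpar, -, -⟩ := hp
  obtain ⟨hm', hpar', -, -⟩ := hq
  simp only at hm hm' h hpar hpar' ⊢
  cases c <;> cases c' <;>
    simp only [colPos, gap_a_a, gap_a_b, gap_a_ab, gap_a_aa, gap_a_bb, gap_b_a, gap_b_b,
      gap_b_ab, gap_b_aa, gap_b_bb, gap_ab_a, gap_ab_b, gap_ab_ab, gap_ab_aa, gap_ab_bb,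
      gap_aa_a, gap_aa_b, gap_aa_ab, gap_aa_aa, gap_aa_bb, gap_bb_a, gap_bb_b, gap_bb_ab,
      gap_bb_aa, gap_bb_bb, true_or, or_true, forall_const] at h hpar hpar' ⊢ <;>
    (try split_ifs at h) <;> omega

lemma head_pos_max {p : ℕ × Col} {l : List (ℕ × Col)} (h : IsColPartition (p :: l)) :
    ∀ x ∈ l, colPos x < colPos p := by
  induction l generalizing p with
  | nil => simp
  | cons q t ih =>
    intro x hx
    obtain ⟨hp, h1, hg⟩ := isCol_cons.1 h
    have hqlt : colPos q < colPos p :=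
      pos_lt_of_gap hp (partOK_of_mem h1 (by simp)) (hg q (by simp))
    rcases List.mem_cons.1 hx with rfl | hx
    · exact hqlt
    · exact lt_trans (ih h1 x hx) hqlt

lemma forall_pos_le {l : List (ℕ × Col)} (h : IsColPartition l) (C : ℕ) :
    (∀ x ∈ l, colPos x ≤ C) ↔ ∀ q ∈ l.head?, colPos q ≤ C := by
  cases l with
  | nil => simp
  | cons p t =>
    simp only [List.head?_cons, Option.mem_def, Option.some.injEq, forall_eq']
    constructor
    · intro hb; exact hb p (by simp)
    · intro hb x hx
      rcases List.mem_cons.1 hx with rfl | hx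
      · exact hb
      · exact le_of_lt (lt_of_lt_of_le (head_pos_max h x hx) hb)

instance : Fintype Col :=
  ⟨⟨{Col.a, Col.b, Col.ab, Col.aa, Col.bb}, by decide⟩, by intro x; cases x <;> decide⟩

lemma finite_sum_set (n : ℕ) :
    {l : List (ℕ × Col) | (∀ p ∈ l, 1 ≤ p.1) ∧ (l.map Prod.fst).sum = n}.Finite := by
  induction n using Nat.strong_induction_on with
  | _ n ih =>
    have hidx : ({p : ℕ × Col | 1 ≤ p.1 ∧ p.1 ≤ n}).Finite := by
      have : {p : ℕ × Col | 1 ≤ p.1 ∧ p.1 ≤ n} ⊆ (Set.Icc 1 n) ×ˢ (Set.univ : Set Col) := by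
        rintro ⟨m, c⟩ ⟨h1, h2⟩
        exact ⟨⟨h1, h2⟩, trivial⟩
      exact Set.Finite.subset ((Set.finite_Icc 1 n).prod Set.finite_univ) this
    apply Set.Finite.subset
      (Set.Finite.insert ([] : List (ℕ × Col))
        (Set.Finite.biUnion hidx (fun p hp =>
          Set.Finite.image (fun t => p :: t)
            (ih (n - p.1) (by obtain ⟨h1, h2⟩ := hp; omega)))))
    rintro l ⟨h1, h2⟩
    cases l with
    | nil => exact Set.mem_insert _ _
    | cons p t =>
      refine Set.mem_insert_of_mem _ ?_
      have hp1 : 1 ≤ p.1 := h1 p (by simp)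
      simp only [List.map_cons, List.sum_cons] at h2
      refine Set.mem_biUnion (show p ∈ {p : ℕ × Col | 1 ≤ p.1 ∧ p.1 ≤ n} from ⟨hp1, by omega⟩) ?_
      exact ⟨t, ⟨fun q hq => h1 q (by simp [hq]), by omega⟩, rfl⟩

lemma finite_of_subset (n : ℤ) {s : Set (List (ℕ × Col))}
    (hs : ∀ l ∈ s, IsColPartition l ∧ ((l.map Prod.fst).sum : ℤ) = n) : s.Finite := by
  rcases le_or_gt 0 n with hn | hn
  · apply Set.Finite.subset (finite_sum_set n.toNat)
    intro l hl
    obtain ⟨h1, h2⟩ := hs l hl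
    exact ⟨fun p hp => (h1.1 p hp).1, by omega⟩
  · convert Set.finite_empty
    ext l
    simp only [Set.mem_empty_iff_false, iff_false]
    intro hl
    obtain ⟨-, h2⟩ := hs l hl
    have : (0:ℤ) ≤ ((l.map Prod.fst).sum : ℤ) := Int.natCast_nonneg _
    omega

lemma pos_unique_ab {k : ℕ} (hk : 1 ≤ k) {p : ℕ × Col} (hp : PartOK p)
    (h : colPos p ≤ colPos (2*k+2, Col.ab)) (hne : p ≠ (2*k+2, Col.ab)) :
    colPos p ≤ colPos (2*k+1, Col.b) := by
  obtain ⟨m, c⟩ := p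
  obtain ⟨hm, hpar, -, -⟩ := hp
  cases c <;> simp [colPos, Prod.ext_iff] at h hpar hne ⊢ <;> omega

lemma gap_after_K {k : ℕ} (hk : 1 ≤ k) {q : ℕ × Col} (hq : PartOK q) :
    2*k+2 ≥ q.1 + colMinGap (2*k+2) Col.ab q.2 ↔
      (colPos q ≤ colPos (2*k, Col.a) ∨ q = (2*k, Col.b)) := by
  obtain ⟨m, c⟩ := q
  obtain ⟨hm, hpar, -, -⟩ := hq
  have h2 : (2*k+2) % 2 = 0 := by omega
  cases c <;> simp [colPos, h2, Prod.ext_iff] at hpar ⊢ <;> omega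

lemma gap_after_2kb {k : ℕ} (hk : 1 ≤ k) {q : ℕ × Col} (hq : PartOK q) :
    2*k ≥ q.1 + colMinGap (2*k) Col.b q.2 ↔ colPos q ≤ colPos (2*k-1, Col.a) := by
  obtain ⟨m, c⟩ := q
  obtain ⟨hm, hpar, -, -⟩ := hq
  have h2 : (2*k) % 2 = 0 := by omega
  cases c <;> simp [colPos, h2, Prod.ext_iff] at hpar ⊢ <;> omega

lemma aCt_cons_ab (m : ℕ) (l : List (ℕ × Col)) : aCt ((m, Col.ab) :: l) = aCt l + 1 := by
  simp [aCt, List.countP_cons]; omega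

lemma bCt_cons_ab (m : ℕ) (l : List (ℕ × Col)) : bCt ((m, Col.ab) :: l) = bCt l + 1 := by
  simp [bCt, List.countP_cons]; omega

lemma aCt_cons_b (m : ℕ) (l : List (ℕ × Col)) : aCt ((m, Col.b) :: l) = aCt l := by
  simp [aCt, List.countP_cons]

lemma bCt_cons_b (m : ℕ) (l : List (ℕ × Col)) : bCt ((m, Col.b) :: l) = bCt l + 1 := by
  simp [bCt, List.countP_cons]; omega

def dset (K : ℕ × Col) (u v n : ℤ) : Set (List (ℕ × Col)) :=
  {l | IsColPartition l ∧ (∀ p ∈ l, colPos p ≤ colPos K) ∧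
    ((l.map Prod.fst).sum : ℤ) = n ∧ (aCt l : ℤ) = u ∧ (bCt l : ℤ) = v}

lemma dct_eq_ncard (K : ℕ × Col) (u v n : ℤ) : dct K u v n = (dset K u v n).ncard := rfl

lemma dset_finite (K : ℕ × Col) (u v n : ℤ) : (dset K u v n).Finite :=
  finite_of_subset n (fun l hl => ⟨hl.1, hl.2.2.1⟩)

lemma dct_eq_zero {K : ℕ × Col} {u v n : ℤ} (h : u < 0 ∨ v < 0 ∨ n < 0) :
    dct K u v n = 0 := by
  rw [dct_eq_ncard]
  rw [Set.ncard_eq_zero (dset_finite K u v n)]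
  ext l
  simp only [Set.mem_empty_iff_false, iff_false]
  rintro ⟨-, -, hn, hu, hv⟩
  rcases h with h | h | h <;> omega

lemma partOK_K {k : ℕ} (hk : 1 ≤ k) : PartOK (2*k+2, Col.ab) := by
  refine ⟨by omega, by simp, ?_, ?_⟩ <;> simp [Prod.ext_iff] <;> omega

lemma partOK_2kb {k : ℕ} (hk : 1 ≤ k) : PartOK (2*k, Col.b) := by
  refine ⟨by omega, by simp, ?_, ?_⟩ <;> simp [Prod.ext_iff] <;> omega

lemma mem_dset {K : ℕ × Col} {u v n : ℤ} {l : List (ℕ × Col)} :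
    l ∈ dset K u v n ↔ IsColPartition l ∧ (∀ p ∈ l, colPos p ≤ colPos K) ∧
      ((l.map Prod.fst).sum : ℤ) = n ∧ (aCt l : ℤ) = u ∧ (bCt l : ℤ) = v := Iff.rfl

lemma mem_B1_iff {k : ℕ} (hk : 1 ≤ k) (u v n : ℤ) (l : List (ℕ × Col)) :
    l ∈ dset (2*k+1, Col.b) u v n ↔
      l ∈ dset (2*k+2, Col.ab) u v n ∧ ∀ q ∈ l.head?, q ≠ (2*k+2, Col.ab) := by
  simp only [mem_dset]
  constructor
  · rintro ⟨hc, hb, hs⟩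
    refine ⟨⟨hc, ?_, hs⟩, ?_⟩
    · intro p hp
      refine le_trans (hb p hp) ?_
      simp [colPos]; omega
    · rintro q hq rfl
      have := hb _ (List.mem_of_mem_head? hq)
      simp [colPos] at this; omega
  · rintro ⟨⟨hc, hb, hs⟩, hne⟩
    refine ⟨hc, ?_, hs⟩
    rw [forall_pos_le hc]
    intro q hq
    exact pos_unique_ab hk (partOK_of_mem hc (List.mem_of_mem_head? hq))
      (hb _ (List.mem_of_mem_head? hq)) (hne q hq)

lemma cons_mem_iff {k : ℕ} (hk : 1 ≤ k) (u v n : ℤ) (t : List (ℕ × Col)) :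
    ((2*k+2, Col.ab) :: t ∈ dset (2*k+2, Col.ab) u v n ∧ ∀ q ∈ t.head?, q ≠ (2*k, Col.b)) ↔
      t ∈ dset (2*k, Col.a) (u-1) (v-1) (n-(2*k+2)) := by
  simp only [mem_dset, isCol_cons]
  constructor
  · rintro ⟨⟨⟨-, hc, hg⟩, hb, hn, hu, hv⟩, hne⟩
    refine ⟨hc, ?_, ?_, ?_, ?_⟩
    · rw [forall_pos_le hc]
      intro q hq
      rcases (gap_after_K hk (partOK_of_mem hc (List.mem_of_mem_head? hq))).1 (hg q hq) with h | h
      · exact h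
      · exact absurd h (hne q hq)
    · simp only [List.map_cons, List.sum_cons] at hn; push_cast at hn ⊢; omega
    · rw [aCt_cons_ab] at hu; push_cast at hu ⊢; omega
    · rw [bCt_cons_ab] at hv; push_cast at hv ⊢; omega
  · rintro ⟨hc, hb, hn, hu, hv⟩
    have hne : ∀ q ∈ t.head?, q ≠ (2*k, Col.b) := by
      rintro q hq rfl
      have := hb _ (List.mem_of_mem_head? hq)
      simp [colPos] at this; omega
    refine ⟨⟨⟨partOK_K hk, hc, ?_⟩, ?_, ?_, ?_, ?_⟩, hne⟩
    · intro q hq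
      exact (gap_after_K hk (partOK_of_mem hc (List.mem_of_mem_head? hq))).2
        (Or.inl (hb _ (List.mem_of_mem_head? hq)))
    · intro p hp
      rcases List.mem_cons.1 hp with rfl | hp
      · exact le_refl _
      · refine le_trans (hb p hp) ?_
        simp [colPos]; omega
    · simp only [List.map_cons, List.sum_cons]; push_cast at hn ⊢; omega
    · rw [aCt_cons_ab]; push_cast at hu ⊢; omega
    · rw [bCt_cons_ab]; push_cast at hv ⊢; omega

lemma cons2_mem_iff {k : ℕ} (hk : 1 ≤ k) (u v n : ℤ) (s : List (ℕ × Col)) :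
    (2*k+2, Col.ab) :: (2*k, Col.b) :: s ∈ dset (2*k+2, Col.ab) u v n ↔
      s ∈ dset (2*k-1, Col.a) (u-1) (v-2) (n-(4*k+2)) := by
  simp only [mem_dset, isCol_cons]
  constructor
  · rintro ⟨⟨-, ⟨-, hc, hg⟩, -⟩, hb, hn, hu, hv⟩
    refine ⟨hc, ?_, ?_, ?_, ?_⟩
    · rw [forall_pos_le hc]
      intro q hq
      exact (gap_after_2kb hk (partOK_of_mem hc (List.mem_of_mem_head? hq))).1 (hg q hq)
    · simp only [List.map_cons, List.sum_cons] at hn; push_cast at hn ⊢; omega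
    · rw [aCt_cons_ab, aCt_cons_b] at hu; push_cast at hu ⊢; omega
    · rw [bCt_cons_ab, bCt_cons_b] at hv; push_cast at hv ⊢; omega
  · rintro ⟨hc, hb, hn, hu, hv⟩
    refine ⟨⟨partOK_K hk, ⟨partOK_2kb hk, hc, ?_⟩, ?_⟩, ?_, ?_, ?_, ?_⟩
    · intro q hq
      exact (gap_after_2kb hk (partOK_of_mem hc (List.mem_of_mem_head? hq))).2
        (hb _ (List.mem_of_mem_head? hq))
    · intro q hq
      simp only [List.head?_cons, Option.mem_def, Option.some.injEq] at hq
      subst hq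
      show 2*k+2 ≥ 2*k + colMinGap (2*k+2) Col.ab Col.b
      simp only [gap_ab_b]
      split_ifs <;> omega
    · intro p hp
      rcases List.mem_cons.1 hp with rfl | hp
      · exact le_refl _
      · rcases List.mem_cons.1 hp with rfl | hp
        · simp [colPos]; omega
        · refine le_trans (hb p hp) ?_
          simp [colPos]; omega
    · simp only [List.map_cons, List.sum_cons]; push_cast at hn ⊢; omega
    · rw [aCt_cons_ab, aCt_cons_b]; push_cast at hu ⊢; omega
    · rw [bCt_cons_ab, bCt_cons_b]; push_cast at hv ⊢; omega

lemma key_count (k : ℕ) (hk : 1 ≤ k) (u v n : ℤ) :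
    dct (2*k+2, Col.ab) u v n =
      dct (2*k+1, Col.b) u v n + dct (2*k, Col.a) (u-1) (v-1) (n-(2*k+2)) +
      dct (2*k-1, Col.a) (u-1) (v-2) (n-(4*k+2)) := by
  classical
  have hA : dset (2*k+2, Col.ab) u v n =
      dset (2*k+1, Col.b) u v n ∪
        (fun t => (2*k+2, Col.ab) :: t) '' dset (2*k, Col.a) (u-1) (v-1) (n-(2*k+2)) ∪
        (fun s => (2*k+2, Col.ab) :: (2*k, Col.b) :: s) ''
          dset (2*k-1, Col.a) (u-1) (v-2) (n-(4*k+2)) := by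
    ext l
    simp only [Set.mem_union, Set.mem_image]
    constructor
    · intro hl
      by_cases h1 : ∀ q ∈ l.head?, q ≠ (2*k+2, Col.ab)
      · exact Or.inl (Or.inl ((mem_B1_iff hk u v n l).2 ⟨hl, h1⟩))
      · push_neg at h1
        obtain ⟨q, hq, rfl⟩ := h1
        cases l with
        | nil => simp at hq
        | cons p t =>
          simp only [List.head?_cons, Option.mem_def, Option.some.injEq] at hq
          subst hq
          by_cases h2 : ∀ q ∈ t.head?, q ≠ (2*k, Col.b)
          · exact Or.inl (Or.inr ⟨t, (cons_mem_iff hk u v n t).1 ⟨hl, h2⟩, rfl⟩)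
          · push_neg at h2
            obtain ⟨q, hq2, rfl⟩ := h2
            cases t with
            | nil => simp at hq2
            | cons r s =>
              simp only [List.head?_cons, Option.mem_def, Option.some.injEq] at hq2
              subst hq2
              exact Or.inr ⟨s, (cons2_mem_iff hk u v n s).1 hl, rfl⟩
    · rintro ((hl | ⟨t, ht, rfl⟩) | ⟨s, hs, rfl⟩)
      · exact ((mem_B1_iff hk u v n l).1 hl).1
      · exact ((cons_mem_iff hk u v n t).2 ht).1
      · exact (cons2_mem_iff hk u v n s).2 hs
  have fB1 := dset_finite (2*k+1, Col.b) u v n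
  have fB2 := dset_finite (2*k, Col.a) (u-1) (v-1) (n-(2*k+2))
  have fB3 := dset_finite (2*k-1, Col.a) (u-1) (v-2) (n-(4*k+2))
  have inj1 : Function.Injective (fun t : List (ℕ × Col) => (2*k+2, Col.ab) :: t) :=
    fun x y h => by simpa using h
  have inj2 : Function.Injective
      (fun s : List (ℕ × Col) => (2*k+2, Col.ab) :: (2*k, Col.b) :: s) :=
    fun x y h => by simpa using h
  have d12 : Disjoint (dset (2*k+1, Col.b) u v n)
      ((fun t => (2*k+2, Col.ab) :: t) '' dset (2*k, Col.a) (u-1) (v-1) (n-(2*k+2))) := by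
    rw [Set.disjoint_left]
    rintro l hl ⟨t, ht, rfl⟩
    exact ((mem_B1_iff hk u v n _).1 hl).2 _ (by simp) rfl
  have d13 : Disjoint (dset (2*k+1, Col.b) u v n)
      ((fun s => (2*k+2, Col.ab) :: (2*k, Col.b) :: s) ''
        dset (2*k-1, Col.a) (u-1) (v-2) (n-(4*k+2))) := by
    rw [Set.disjoint_left]
    rintro l hl ⟨s, hs, rfl⟩
    exact ((mem_B1_iff hk u v n _).1 hl).2 _ (by simp) rfl
  have d23 : Disjoint
      ((fun t => (2*k+2, Col.ab) :: t) '' dset (2*k, Col.a) (u-1) (v-1) (n-(2*k+2)))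
      ((fun s => (2*k+2, Col.ab) :: (2*k, Col.b) :: s) ''
        dset (2*k-1, Col.a) (u-1) (v-2) (n-(4*k+2))) := by
    rw [Set.disjoint_left]
    rintro l ⟨t, ht, rfl⟩ ⟨s, hs, hEq⟩
    simp only [List.cons.injEq] at hEq
    obtain ⟨-, hEq⟩ := hEq
    have hne := ((cons_mem_iff hk u v n t).2 ht).2
    rw [← hEq] at hne
    exact hne _ (by simp) rfl
  rw [dct_eq_ncard, dct_eq_ncard, dct_eq_ncard, dct_eq_ncard, hA,
    Set.ncard_union_eq (Set.disjoint_union_left.2 ⟨d13, d23⟩)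
      (fB1.union (fB2.image _)) (fB3.image _),
    Set.ncard_union_eq d12 fB1 (fB2.image _),
    Set.ncard_image_of_injective _ inj1, Set.ncard_image_of_injective _ inj2]

open MvPowerSeries Finsupp in
lemma coeff_Gf (K : ℕ × Col) (e : Fin 3 →₀ ℕ) :
    MvPowerSeries.coeff e (Gf K) = (dct K (e 0) (e 1) (e 2) : ℚ) := rfl

open MvPowerSeries Finsupp in
lemma coeff_mono_mul (K : ℕ × Col) (a b m : ℕ) (e : Fin 3 →₀ ℕ) :
    MvPowerSeries.coeff e (MvPowerSeries.monomial
      (single (0 : Fin 3) a + single 1 b + single 2 m) (1:ℚ) * Gf K) =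
    (dct K ((e 0 : ℤ) - a) ((e 1 : ℤ) - b) ((e 2 : ℤ) - m) : ℚ) := by
  set d : Fin 3 →₀ ℕ := single (0 : Fin 3) a + single 1 b + single 2 m with hd
  have h0 : d 0 = a := by simp [hd, Finsupp.single_apply]
  have h1 : d 1 = b := by simp [hd, Finsupp.single_apply]
  have h2 : d 2 = m := by simp [hd, Finsupp.single_apply]
  rw [MvPowerSeries.coeff_monomial_mul]
  split_ifs with h
  · rw [one_mul, coeff_Gf]
    have he0 := (Finsupp.le_def.1 h) 0
    have he1 := (Finsupp.le_def.1 h) 1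
    have he2 := (Finsupp.le_def.1 h) 2
    rw [h0] at he0; rw [h1] at he1; rw [h2] at he2
    have e0' : (((e - d) 0 : ℕ) : ℤ) = (e 0 : ℤ) - a := by rw [Finsupp.tsub_apply, h0]; omega
    have e1' : (((e - d) 1 : ℕ) : ℤ) = (e 1 : ℤ) - b := by rw [Finsupp.tsub_apply, h1]; omega
    have e2' : (((e - d) 2 : ℕ) : ℤ) = (e 2 : ℤ) - m := by rw [Finsupp.tsub_apply, h2]; omega
    rw [e0', e1', e2']
  · rw [Finsupp.le_def] at h
    push_neg at h
    obtain ⟨i, hi⟩ := h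
    fin_cases i
    · have hi' : e 0 < d 0 := hi
      rw [h0] at hi'
      rw [dct_eq_zero (Or.inl (by omega))]; simp
    · have hi' : e 1 < d 1 := hi
      rw [h1] at hi'
      rw [dct_eq_zero (Or.inr (Or.inl (by omega)))]; simp
    · have hi' : e 2 < d 2 := hi
      rw [h2] at hi'
      rw [dct_eq_zero (Or.inr (Or.inr (by omega)))]; simp

open MvPowerSeries Finsupp in
lemma mono_eq1 (m : ℕ) : (X 0 * X 1 * X 2 ^ m : MvPowerSeries (Fin 3) ℚ) =
    MvPowerSeries.monomial (single (0 : Fin 3) 1 + single 1 1 + single 2 m) 1 := by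
  rw [X_def, X_def, X_pow_eq, monomial_mul_monomial, monomial_mul_monomial, one_mul, one_mul]

open MvPowerSeries Finsupp in
lemma mono_eq2 (m : ℕ) : (X 0 * X 1 ^ 2 * X 2 ^ m : MvPowerSeries (Fin 3) ℚ) =
    MvPowerSeries.monomial (single (0 : Fin 3) 1 + single 1 2 + single 2 m) 1 := by
  rw [X_def, X_pow_eq, X_pow_eq, monomial_mul_monomial, monomial_mul_monomial, one_mul, one_mul]


open MvPowerSeries in
/-- q-difference equation (3.13): G_{(2k+2)_{ab}} = G_{(2k+1)_b}
+ abq^{2k+2} G_{(2k)_a} + ab²q^{4k+2} G_{(2k-1)_a}. -/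
theorem qdiff_eq5 (k : ℕ) (hk : 1 ≤ k) :
    Gf (2*k+2, Col.ab) =
      Gf (2*k+1, Col.b) +
      (X 0 * X 1 * X 2 ^ (2*k+2) : MvPowerSeries (Fin 3) ℚ) * Gf (2*k, Col.a) +
      (X 0 * X 1 ^ 2 * X 2 ^ (4*k+2) : MvPowerSeries (Fin 3) ℚ) * Gf (2*k-1, Col.a) := by
  apply MvPowerSeries.ext
  intro e
  rw [map_add, map_add, mono_eq1, mono_eq2, coeff_mono_mul, coeff_mono_mul,
    coeff_Gf, coeff_Gf, key_count k hk (e 0) (e 1) (e 2)]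
  push_cast
  ring
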